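/- The series Σ_{m=1}^{∞} (3m)!/((m!)^3 · 3^{3m}) diverges (the sequence m ↦ (3m)!/((m!)^3 · 3^{3m}) is not summable). Consequently, the expected number of returns to the origin of the random walk with steps uniform on the third roots of unity is infinite, i.e. the walk is recurrent. -/

import Mathlib

lemma key_bound : ∀ m : ℕ,
    (Nat.factorial (m+1))^3 * 3^(3*(m+1)) ≤ 5*(m+1) * Nat.factorial (3*(m+1)) := by
  intro m
  induction m with
  | zero => decide
  | succ n ih =>
      have h1 : 3*(n+2) = (3*(n+1)+1) + 2 := by ring
      have h2 : Nat.factorial (3*(n+2)) =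
          (3*(n+1)+3) * ((3*(n+1)+2) * ((3*(n+1)+1) * Nat.factorial (3*(n+1)))) := by
        rw [h1]; simp [Nat.factorial_succ]
      have h3 : Nat.factorial (n+2) = (n+2) * Nat.factorial (n+1) := rfl
      have h4 : 3^(3*(n+2)) = 27 * 3^(3*(n+1)) := by
        rw [show 3*(n+2) = 3*(n+1) + 3 by ring, pow_add]; ring
      rw [h2, h3, h4]
      calc ((n+2) * Nat.factorial (n+1))^3 * (27 * 3^(3*(n+1)))
          = (n+2)^3 * 27 * ((Nat.factorial (n+1))^3 * 3^(3*(n+1))) := by ring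
        _ ≤ (n+2)^3 * 27 * (5*(n+1) * Nat.factorial (3*(n+1))) :=
            Nat.mul_le_mul_left _ ih
        _ ≤ 5*(n+1+1) * ((3*(n+1)+3) * ((3*(n+1)+2) * ((3*(n+1)+1) * Nat.factorial (3*(n+1))))) := by
            nlinarith [Nat.factorial_pos (3*(n+1)), sq_nonneg n]

/-- the series Σ_{m≥1} (3m)!/((m!)³·3^{3m}) diverges, i.e. the sequence of
return probabilities of the random walk with steps uniform on the third roots of unity is
not summable; hence the expected number of returns to the origin is infinite and the walk
is recurrent. -/
theorem not_summable_return_probabilities_N3 :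
    ¬ Summable (fun m : ℕ =>
      (Nat.factorial (3 * (m + 1)) : ℝ) /
        ((Nat.factorial (m + 1) : ℝ) ^ 3 * 3 ^ (3 * (m + 1)))) := by
  intro h
  have hcomp : ∀ m : ℕ, 1 / (5 * ((m:ℝ)+1)) ≤
      (Nat.factorial (3 * (m + 1)) : ℝ) /
        ((Nat.factorial (m + 1) : ℝ) ^ 3 * 3 ^ (3 * (m + 1))) := by
    intro m
    have hB : (0:ℝ) < (Nat.factorial (m + 1) : ℝ) ^ 3 * 3 ^ (3 * (m + 1)) := by
      positivity
    have h5 : (0:ℝ) < 5 * ((m:ℝ)+1) := by positivity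
    rw [div_le_div_iff₀ h5 hB]
    have := key_bound m
    have : ((Nat.factorial (m+1))^3 * 3^(3*(m+1)) : ℝ) ≤
        ((5*(m+1) * Nat.factorial (3*(m+1)) : ℕ) : ℝ) := by
      exact_mod_cast Nat.cast_le.mpr this
    push_cast at this ⊢
    nlinarith
  have hsum : Summable (fun m : ℕ => 1 / (5 * ((m:ℝ)+1))) :=
    Summable.of_nonneg_of_le (fun m => by positivity) hcomp h
  have hsum2 : Summable (fun m : ℕ => 1 / ((m:ℝ)+1)) := by
    have := hsum.mul_left 5
    refine this.congr fun m => ?_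
    field_simp
  have hsum3 : Summable (fun n : ℕ => 1 / (n:ℝ)) := by
    rw [← summable_nat_add_iff 1]
    exact hsum2.congr fun m => by push_cast; ring
  exact Real.not_summable_one_div_natCast hsum3
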